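/- For every positive integer n, s(2^(7n) + 2^(6n) − 2^(4n) − 2^(3n) + 2^n + 1) = 3n + 2. -/

import Mathlib

/-- `s n` is the number of nonzero digits (ones) in the binary expansion of `n`. -/
def s (n : ℕ) : ℕ := (Nat.digits 2 n).count 1

lemma s_eq_bitIndices_length (n : ℕ) : s n = n.bitIndices.length := by
  induction n using Nat.strong_induction_on with
  | _ n ih =>
    rcases Nat.eq_zero_or_pos n with h | h
    · simp [h, s]
    · have h2 : n / 2 < n := Nat.div_lt_self h (by norm_num)
      have hd := Nat.digits_def' (by norm_num : 1 < 2) h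
      have hn2 := ih (n / 2) h2
      have hkey := Nat.div_add_mod n 2
      rcases Nat.mod_two_eq_zero_or_one n with hm | hm
      · have hs : s n = s (n / 2) := by
          rw [s, hd, hm, List.count_cons, s]
          norm_num
        have hne : n = 2 * (n / 2) := by omega
        have hbl : n.bitIndices.length = (n / 2).bitIndices.length := by
          conv_lhs => rw [hne]
          rw [Nat.bitIndices_two_mul, List.length_map]
        omega
      · have hs : s n = s (n / 2) + 1 := by
          rw [s, hd, hm, List.count_cons, s]
          norm_num
        have hne : n = 2 * (n / 2) + 1 := by omega
        have hbl : n.bitIndices.length = (n / 2).bitIndices.length + 1 := by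
          conv_lhs => rw [hne]
          rw [Nat.bitIndices_two_mul_add_one, List.length_cons, List.length_map]
        omega

lemma sum_pow_range' (a k : ℕ) :
    ((List.range' a k).map (fun i => 2 ^ i)).sum = 2 ^ (a + k) - 2 ^ a := by
  induction k generalizing a with
  | zero => simp
  | succ k ih =>
    rw [List.range'_succ]
    simp only [List.map_cons, List.sum_cons, ih (a + 1)]
    have he : a + 1 + k = a + (k + 1) := by omega
    rw [he]
    have h1 : 2 ^ (a + 1) = 2 * 2 ^ a := by rw [pow_succ]; ring
    have h3 : 2 ^ (a + 1) ≤ 2 ^ (a + (k + 1)) := Nat.pow_le_pow_right (by norm_num) (by omega)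
    omega

theorem s_b0 (n : ℕ) (hn : 1 ≤ n) :
    s (2 ^ (7 * n) + 2 ^ (6 * n) - 2 ^ (4 * n) - 2 ^ (3 * n) + 2 ^ n + 1) = 3 * n + 2 := by
  set L : List ℕ := 0 :: n :: (List.range' (3 * n) n ++ List.range' (4 * n + 1) (2 * n - 1)
    ++ [7 * n]) with hL
  have hsorted : L.Pairwise (· < ·) := by
    rw [hL]
    simp only [List.pairwise_cons, List.mem_cons, List.mem_append, List.mem_singleton,
      List.mem_range'_1, List.not_mem_nil, or_false]
    refine ⟨?_, ?_, ?_⟩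
    · rintro b (rfl | (h | h) | rfl) <;> omega
    · rintro b ((h | h) | rfl) <;> omega
    · rw [List.pairwise_append, List.pairwise_append]
      refine ⟨⟨List.pairwise_lt_range' .., List.pairwise_lt_range' .., ?_⟩,
        List.pairwise_singleton _ _, ?_⟩
      · intro a ha b hb
        rw [List.mem_range'_1] at ha hb
        omega
      · intro a ha b hb
        rw [List.mem_append, List.mem_range'_1, List.mem_range'_1] at ha
        rw [List.mem_singleton] at hb
        subst hb
        omega
  have hsum : ((L.map fun i => 2 ^ i).sum) =
      2 ^ (7 * n) + 2 ^ (6 * n) - 2 ^ (4 * n) - 2 ^ (3 * n) + 2 ^ n + 1 := by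
    rw [hL]
    simp only [List.map_cons, List.map_append, List.sum_cons, List.sum_append,
      sum_pow_range', List.map_cons, List.map_nil, List.sum_cons, List.sum_nil]
    have e1 : 2 ^ (3 * n + n) = 2 ^ (4 * n) := by ring_nf
    have e2 : 2 ^ (4 * n + 1 + (2 * n - 1)) = 2 ^ (6 * n) := by congr 1; omega
    have e3 : 2 ^ (4 * n + 1) = 2 * 2 ^ (4 * n) := by rw [pow_succ]; ring
    rw [e1, e2, e3]
    have i1 : 2 ^ (3 * n) ≤ 2 ^ (4 * n) := Nat.pow_le_pow_right (by norm_num) (by omega)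
    have i2 : 2 * 2 ^ (4 * n) ≤ 2 ^ (6 * n) := by
      calc 2 * 2 ^ (4 * n) = 2 ^ (4 * n + 1) := by rw [pow_succ]; ring
        _ ≤ 2 ^ (6 * n) := Nat.pow_le_pow_right (by norm_num) (by omega)
    have i3 : 2 ^ (4 * n) ≤ 2 ^ (7 * n) := Nat.pow_le_pow_right (by norm_num) (by omega)
    omega
  have hbi := Nat.bitIndices_twoPowsum hsorted.sortedLT
  rw [hsum] at hbi
  rw [s_eq_bitIndices_length, hbi, hL]
  simp [List.length_range']
  omega
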